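/- Let H be a homogeneous relation on X and let M' be the family of homogeneous modules of H together with the empty set. Then (M', ⊆) is a lattice: any two members have an infimum and supremum with respect to inclusion. -/
import Mathlib


/-- `H` is a homogeneous relation: for each `x`, the binary relation
`H x · ·` is an equivalence relation on the elements distinct from `x`. -/
def IsHomRel {X : Type*} (H : X → X → X → Prop) : Prop :=
  (∀ x y, y ≠ x → H x y y) ∧
  (∀ x y z, y ≠ x → z ≠ x → H x y z → H x z y) ∧
  (∀ x y z w, y ≠ x → z ≠ x → w ≠ x → H x y z → H x z w → H x y w)

/-- `M` is a homogeneous module of `H`. -/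
def IsModule {X : Type*} (H : X → X → X → Prop) (M : Set X) : Prop :=
  ∀ m ∈ M, ∀ m' ∈ M, ∀ x ∉ M, H x m m'

/-- Two sets overlap. -/
def Overlap {X : Type*} (A B : Set X) : Prop :=
  (A ∩ B).Nonempty ∧ (A \ B).Nonempty ∧ (B \ A).Nonempty

lemma empty_isModule {X : Type*} (H : X → X → X → Prop) : IsModule H (∅ : Set X) := by
  intro m hm; exact absurd hm (Set.notMem_empty m)

lemma toModule {X : Type*} {H : X → X → X → Prop} {M : Set X}
    (h : IsModule H M ∨ M = ∅) : IsModule H M := by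
  rcases h with h | h
  · exact h
  · rw [h]; exact empty_isModule H

theorem stmt_4 {X : Type*} [Fintype X] (H : X → X → X → Prop)
    (hH : IsHomRel H) :
    ∀ A ∈ {M : Set X | IsModule H M ∨ M = ∅},
      ∀ B ∈ {M : Set X | IsModule H M ∨ M = ∅},
        (∃ I ∈ {M : Set X | IsModule H M ∨ M = ∅}, I ⊆ A ∧ I ⊆ B ∧
          ∀ C ∈ {M : Set X | IsModule H M ∨ M = ∅}, C ⊆ A → C ⊆ B → C ⊆ I) ∧
        (∃ S ∈ {M : Set X | IsModule H M ∨ M = ∅}, A ⊆ S ∧ B ⊆ S ∧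
          ∀ C ∈ {M : Set X | IsModule H M ∨ M = ∅}, A ⊆ C → B ⊆ C → S ⊆ C) := by
  intro A hA B hB
  have hAmod := toModule hA
  have hBmod := toModule hB
  constructor
  · -- infimum: A ∩ B
    refine ⟨A ∩ B, Or.inl ?_, Set.inter_subset_left, Set.inter_subset_right,
      fun C _ hCA hCB => Set.subset_inter hCA hCB⟩
    intro m hm m' hm' x hx
    rcases not_and_or.mp (fun h => hx ⟨h.1, h.2⟩) with hxA | hxB
    · exact hAmod m hm.1 m' hm'.1 x hxA
    · exact hBmod m hm.2 m' hm'.2 x hxB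
  · -- supremum: intersection of all modules containing A and B
    set F : Set (Set X) := {C | IsModule H C ∧ A ⊆ C ∧ B ⊆ C} with hF
    have hSA : A ⊆ ⋂₀ F := fun a ha => Set.mem_sInter.mpr fun C hC => hC.2.1 ha
    have hSB : B ⊆ ⋂₀ F := fun b hb => Set.mem_sInter.mpr fun C hC => hC.2.2 hb
    refine ⟨⋂₀ F, Or.inl ?_, hSA, hSB, ?_⟩
    · intro m hm m' hm' x hx
      rw [Set.mem_sInter] at hx
      push_neg at hx
      obtain ⟨C, hC, hxC⟩ := hx
      exact hC.1 m (hm C hC) m' (hm' C hC) x hxC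
    · intro C hC hAC hBC
      exact Set.sInter_subset_of_mem ⟨toModule hC, hAC, hBC⟩
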